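/- General quantum MacWilliams theorem: let M₁, M₂ be Hermitian q^n×q^n complex matrices, let k ≥ 1, and for each j ∈ {1,…,n} let wtⱼ : (ℤ/qℤ)² × (ℤ/qℤ)² → Option (Fin k → ℕ) be a weight function. Suppose Φ : (Fin k → ℂ) → (Fin k → ℂ) satisfies: for every j, every pair of single-qudit labels d, d' ∈ (ℤ/qℤ)², and every u : Fin k → ℂ, (Φu)^{wtⱼ(d,d')} = q^{−2} Σ_{e,e' ∈ (ℤ/qℤ)²} Tr(E(e)† E(d) E(e') E(d')†) · u^{wtⱼ(e,e')}. Then for every u : Fin k → ℂ, Σ_{p,p' ∈ ((ℤ/qℤ)²)ⁿ} Tr(E(p)† M₁ E(p') M₂) · ∏ⱼ u^{wtⱼ(pⱼ,p'ⱼ)} = Σ_{p,p' ∈ ((ℤ/qℤ)²)ⁿ} Tr(E(p)† M₁) Tr(E(p') M₂) · ∏ⱼ (Φu)^{wtⱼ(pⱼ,p'ⱼ)}. -/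

import Mathlib

open Matrix Polynomial
open scoped BigOperators ComplexConjugate Kronecker

noncomputable section

/-- Generalized Pauli `X` (cyclic shift) on `ℂ^q`. -/
def Xmat (q : ℕ) : Matrix (Fin q) (Fin q) ℂ :=
  fun i j => if (i : ℕ) = ((j : ℕ) + 1) % q then 1 else 0

/-- Generalized Pauli `Z` (clock) on `ℂ^q`, `Z|j⟩ = ζ^j |j⟩` with `ζ = exp(2πi/q)`. -/
def Zmat (q : ℕ) : Matrix (Fin q) (Fin q) ℂ :=
  Matrix.diagonal fun j => Complex.exp (2 * (Real.pi : ℂ) * Complex.I / (q : ℂ)) ^ (j : ℕ)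

/-- Single-qudit Pauli `E(a,b) = X^a Z^b` for a label `(a,b) ∈ (ℤ/qℤ)²`. -/
def Epauli (q : ℕ) (p : ZMod q × ZMod q) : Matrix (Fin q) (Fin q) ℂ :=
  Xmat q ^ p.1.val * Zmat q ^ p.2.val

/-- Multi-qudit Pauli `E(p) = E(p₁) ⊗ ⋯ ⊗ E(pₙ)` on the space indexed by `ι → Fin q`. -/
def EV (q : ℕ) {ι : Type} [Fintype ι] (p : ι → ZMod q × ZMod q) :
    Matrix (ι → Fin q) (ι → Fin q) ℂ :=
  fun v w => ∏ i, Epauli q (p i) (v i) (w i)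

/-- Weight of a Pauli label vector: the number of non-identity factors. -/
def wtL (q : ℕ) {ι : Type} [Fintype ι] (p : ι → ZMod q × ZMod q) : ℕ :=
  (Finset.univ.filter fun i => p i ≠ 0).card

/-- Monomial `u^v` for `v : Option (Fin k → ℕ)`: the product `∏ᵢ u(i)^{t(i)}` when
`v = some t`, and `0` when `v = none` (`⊥`). -/
def mono {k : ℕ} (u : Fin k → ℂ) : Option (Fin k → ℕ) → ℂ
  | Option.none => 0
  | Option.some t => ∏ i, u i ^ t i

set_option maxHeartbeats 1000000
set_option linter.unusedSectionVars false

namespace MacAux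

variable (q : ℕ) [NeZero q]

local notation "ζ" => Complex.exp (2 * (Real.pi : ℂ) * Complex.I / (q : ℂ))

lemma zeta_prim : IsPrimitiveRoot (Complex.exp (2 * (Real.pi : ℂ) * Complex.I / (q : ℂ))) q :=
  Complex.isPrimitiveRoot_exp q (NeZero.ne q)

lemma Xpow_apply (m : ℕ) (i j : Fin q) :
    (Xmat q ^ m) i j = if (i : ℕ) = ((j : ℕ) + m) % q then 1 else 0 := by
  induction m generalizing i j with
  | zero =>
    simp only [pow_zero, Matrix.one_apply, Nat.add_zero, Nat.mod_eq_of_lt j.isLt, Fin.ext_iff]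
  | succ m ih =>
    rw [pow_succ, Matrix.mul_apply]
    simp only [ih, Xmat]
    have hx : ∀ x : Fin q, ((x:ℕ) = ((j:ℕ)+1) % q) ↔ x = ⟨((j:ℕ)+1) % q, Nat.mod_lt _ (NeZero.pos q)⟩ := by
      intro x; rw [Fin.ext_iff]
    simp only [hx]
    simp only [mul_ite, mul_one, mul_zero, Finset.sum_ite_eq', Finset.mem_univ, if_true]
    rw [Nat.mod_add_mod]
    have h2 : (j:ℕ) + 1 + m = (j:ℕ) + (m + 1) := by omega
    rw [h2]

lemma Epauli_apply (p : ZMod q × ZMod q) (s t : Fin q) :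
    Epauli q p s t = (if (s:ℕ) = ((t:ℕ) + p.1.val) % q then 1 else 0) * ζ ^ ((t:ℕ) * p.2.val) := by
  rw [Epauli, Zmat, Matrix.diagonal_pow, Matrix.mul_diagonal, Xpow_apply]
  rw [Pi.pow_apply, ← pow_mul]

end MacAux

namespace MacAux2
open MacAux
variable (q : ℕ) [NeZero q]

local notation "ζ" => Complex.exp (2 * (Real.pi : ℂ) * Complex.I / (q : ℂ))

lemma conj_zeta : (starRingEnd ℂ) ζ = ζ⁻¹ := by
  rw [← Complex.exp_conj, ← Complex.exp_neg]
  congr 1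
  simp [map_div₀, Complex.conj_I, map_ofNat]
  ring

lemma cond_iff (s t : Fin q) (a : ZMod q) :
    ((s:ℕ) = ((t:ℕ) + a.val) % q) ↔ a = ((s:ℕ) : ZMod q) - ((t:ℕ) : ZMod q) := by
  have h1 : ((((t:ℕ) : ZMod q)) + a).val = ((t:ℕ) + a.val) % q := by
    rw [ZMod.val_add, ZMod.val_natCast, Nat.mod_add_mod]
  rw [← h1]
  constructor
  · intro h
    have h3 : ((s:ℕ) : ZMod q) = ((t:ℕ) : ZMod q) + a :=
      (congrArg (Nat.cast : ℕ → ZMod q) h).trans (ZMod.natCast_rightInverse _)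
    exact eq_sub_iff_add_eq'.mpr h3.symm
  · intro h
    rw [h, show ((t:ℕ) : ZMod q) + (((s:ℕ) : ZMod q) - ((t:ℕ) : ZMod q)) = ((s:ℕ):ZMod q) from by
      ring, ZMod.val_cast_of_lt s.isLt]

lemma natCast_fin_inj (s v : Fin q) : (((s:ℕ) : ZMod q) = ((v:ℕ) : ZMod q)) ↔ s = v := by
  constructor
  · intro h
    have := congrArg ZMod.val h
    rw [ZMod.val_cast_of_lt s.isLt, ZMod.val_cast_of_lt v.isLt] at this
    exact Fin.ext this
  · intro h; rw [h]

lemma zmod_sum_pow (ω : ℂ) : ∑ b : ZMod q, ω ^ b.val = ∑ i ∈ Finset.range q, ω ^ i := by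
  apply Finset.sum_nbij (fun b => b.val)
  · intro b _; exact Finset.mem_range.mpr b.val_lt
  · intro b _ c _ h; exact ZMod.val_injective q h
  · intro i hi
    exact ⟨(i : ZMod q), Finset.mem_univ _, ZMod.val_cast_of_lt (Finset.mem_range.mp hi)⟩
  · intro b _; rfl

lemma zeta_sum (t w : Fin q) :
    ∑ b : ZMod q, (starRingEnd ℂ) (ζ ^ ((t:ℕ) * b.val)) * ζ ^ ((w:ℕ) * b.val)
      = (q:ℂ) * (if t = w then 1 else 0) := by
  have hζ : ζ ≠ 0 := Complex.exp_ne_zero _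
  have hq1 : ζ ^ q = 1 := (zeta_prim q).pow_eq_one
  set ω : ℂ := (ζ⁻¹) ^ (t:ℕ) * ζ ^ (w:ℕ) with hω
  have hterm : ∀ b : ZMod q,
      (starRingEnd ℂ) (ζ ^ ((t:ℕ) * b.val)) * ζ ^ ((w:ℕ) * b.val) = ω ^ b.val := by
    intro b
    rw [map_pow, conj_zeta, hω, mul_pow, ← pow_mul, ← pow_mul]
  rw [Finset.sum_congr rfl (fun b _ => hterm b), zmod_sum_pow]
  have hωq : ω ^ q = 1 := by
    rw [hω, mul_pow, ← pow_mul, ← pow_mul, mul_comm (t:ℕ) q, mul_comm (w:ℕ) q,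
      pow_mul, pow_mul, inv_pow, hq1, inv_one, one_pow, one_pow, one_mul]
  by_cases htw : t = w
  · subst htw
    have : ω = 1 := by rw [hω, ← mul_pow, inv_mul_cancel₀ hζ, one_pow]
    simp [this]
  · have hω1 : ω ≠ 1 := by
      intro h
      have hz : ζ ^ ((w:ℤ) - (t:ℤ)) = 1 := by
        rw [zpow_sub₀ hζ, zpow_natCast, zpow_natCast]
        calc ζ ^ (w:ℕ) / ζ ^ (t:ℕ) = (ζ⁻¹) ^ (t:ℕ) * ζ ^ (w:ℕ) := by
              rw [inv_pow]; ring
          _ = 1 := h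
      have hdvd := ((zeta_prim q).zpow_eq_one_iff_dvd _).mp hz
      have : ((w:ℤ) - (t:ℤ)) = 0 := by
        apply Int.eq_zero_of_abs_lt_dvd hdvd
        have h1 : (w:ℤ) < q := by exact_mod_cast w.isLt
        have h2 : (t:ℤ) < q := by exact_mod_cast t.isLt
        have h3 : (0:ℤ) ≤ (w:ℤ) := by positivity
        have h4 : (0:ℤ) ≤ (t:ℤ) := by positivity
        rw [abs_lt]; constructor <;> omega
      apply htw
      apply Fin.ext
      omega
    rw [geom_sum_eq hω1, hωq, sub_self, zero_div, if_neg htw, mul_zero]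

lemma pauli_orth (s t v w : Fin q) :
    ∑ p : ZMod q × ZMod q, (starRingEnd ℂ) (Epauli q p s t) * Epauli q p v w
      = (q:ℂ) * (if s = v ∧ t = w then 1 else 0) := by
  have hterm : ∀ p : ZMod q × ZMod q,
      (starRingEnd ℂ) (Epauli q p s t) * Epauli q p v w
        = ((if (s:ℕ) = ((t:ℕ) + p.1.val) % q then 1 else 0)
            * (if (v:ℕ) = ((w:ℕ) + p.1.val) % q then 1 else 0))
          * ((starRingEnd ℂ) (ζ ^ ((t:ℕ) * p.2.val)) * ζ ^ ((w:ℕ) * p.2.val)) := by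
    intro p
    rw [Epauli_apply, Epauli_apply, _root_.map_mul]
    have : (starRingEnd ℂ) (if (s:ℕ) = ((t:ℕ) + p.1.val) % q then (1:ℂ) else 0)
        = (if (s:ℕ) = ((t:ℕ) + p.1.val) % q then (1:ℂ) else 0) := by
      split <;> simp
    rw [this]; ring
  simp only [hterm]
  rw [Fintype.sum_prod_type]
  dsimp only
  rw [Finset.sum_congr rfl (fun a _ => by rw [← Finset.mul_sum (a := (if (s:ℕ) = ((t:ℕ) + a.val) % q then (1:ℂ) else 0) * (if (v:ℕ) = ((w:ℕ) + a.val) % q then (1:ℂ) else 0)), zeta_sum])]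
  by_cases htw : t = w
  · subst htw
    simp only [eq_self_iff_true, if_true, mul_one, and_true]
    rw [← Finset.sum_mul]
    rw [mul_comm]
    congr 1
    simp only [cond_iff]
    by_cases hsv : s = v
    · subst hsv
      simp
    · rw [if_neg hsv]
      apply Finset.sum_eq_zero
      intro a _
      by_cases h1 : a = ((s:ℕ) : ZMod q) - ((t:ℕ) : ZMod q)
      · rw [if_pos h1, if_neg, mul_zero]
        intro h2
        exact hsv ((natCast_fin_inj q s v).mp (sub_left_inj.mp (h1.symm.trans h2)))
      · rw [if_neg h1, zero_mul]
  · simp [htw]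

end MacAux2

namespace MacAux3
open MacAux MacAux2

variable (q : ℕ) [NeZero q]

def tens {n : ℕ} (A : Fin n → Matrix (Fin q) (Fin q) ℂ) :
    Matrix (Fin n → Fin q) (Fin n → Fin q) ℂ :=
  fun v w => ∏ i, A i (v i) (w i)

lemma EV_eq_tens {n : ℕ} (p : Fin n → ZMod q × ZMod q) :
    EV q p = tens q fun i => Epauli q (p i) := rfl

lemma tens_mul {n : ℕ} (A B : Fin n → Matrix (Fin q) (Fin q) ℂ) :
    tens q A * tens q B = tens q fun i => A i * B i := by
  ext v w
  simp only [Matrix.mul_apply, tens]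
  calc ∑ x : Fin n → Fin q, (∏ i, A i (v i) (x i)) * ∏ i, B i (x i) (w i)
      = ∑ x : Fin n → Fin q, ∏ i, A i (v i) (x i) * B i (x i) (w i) :=
        Finset.sum_congr rfl fun x _ => Finset.prod_mul_distrib.symm
    _ = ∏ i, ∑ j, A i (v i) j * B i j (w i) :=
        (Fintype.prod_sum (κ := fun _ : Fin n => Fin q) fun i j => A i (v i) j * B i j (w i)).symm

lemma tens_conjT {n : ℕ} (A : Fin n → Matrix (Fin q) (Fin q) ℂ) :
    (tens q A)ᴴ = tens q fun i => (A i)ᴴ := by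
  ext v w
  simp [tens, Matrix.conjTranspose_apply, map_prod]

lemma trace_tens {n : ℕ} (A : Fin n → Matrix (Fin q) (Fin q) ℂ) :
    (tens q A).trace = ∏ i, (A i).trace := by
  simp only [Matrix.trace, Matrix.diag, tens]
  exact (Fintype.prod_sum fun i (j : Fin q) => A i j j).symm

lemma prod_ind {n : ℕ} (P : Fin n → Prop) [DecidablePred P] :
    (∏ i, if P i then (1:ℂ) else 0) = if ∀ i, P i then 1 else 0 := by
  by_cases h : ∀ i, P i
  · rw [if_pos h]; apply Finset.prod_eq_one; intro i _; rw [if_pos (h i)]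
  · rw [if_neg h]; push_neg at h; obtain ⟨i, hi⟩ := h
    exact Finset.prod_eq_zero (Finset.mem_univ i) (if_neg hi)

lemma EV_orth {n : ℕ} (s t v w : Fin n → Fin q) :
    ∑ p : Fin n → ZMod q × ZMod q, (starRingEnd ℂ) (EV q p s t) * EV q p v w
      = (q:ℂ)^n * if s = v ∧ t = w then 1 else 0 := by
  have h1 : ∀ p : Fin n → ZMod q × ZMod q,
      (starRingEnd ℂ) (EV q p s t) * EV q p v w
        = ∏ i, (starRingEnd ℂ) (Epauli q (p i) (s i) (t i)) * Epauli q (p i) (v i) (w i) := by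
    intro p
    simp only [EV]
    rw [map_prod]
    exact Finset.prod_mul_distrib.symm
  simp only [h1]
  rw [← Fintype.prod_sum
    (fun i (d : ZMod q × ZMod q) => (starRingEnd ℂ) (Epauli q d (s i) (t i)) * Epauli q d (v i) (w i))]
  simp only [pauli_orth]
  rw [Finset.prod_mul_distrib, Finset.prod_const, Finset.card_univ, Fintype.card_fin, prod_ind]
  have hiff : (∀ i, s i = v i ∧ t i = w i) ↔ (s = v ∧ t = w) := by
    constructor
    · intro h
      exact ⟨funext fun i => (h i).1, funext fun i => (h i).2⟩
    · intro ⟨ha, hb⟩ i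
      exact ⟨congrFun ha i, congrFun hb i⟩
  simp only [hiff]

lemma expand1 {n : ℕ} (M : Matrix (Fin n → Fin q) (Fin n → Fin q) ℂ) :
    ∑ p : Fin n → ZMod q × ZMod q, ((EV q p)ᴴ * M).trace • EV q p = ((q:ℂ)^n) • M := by
  have htr : ∀ p : Fin n → ZMod q × ZMod q,
      ((EV q p)ᴴ * M).trace = ∑ t, ∑ s, (starRingEnd ℂ) (EV q p s t) * M s t := by
    intro p
    simp [Matrix.trace, Matrix.diag, Matrix.mul_apply, Matrix.conjTranspose_apply]
  ext v w
  simp only [Matrix.sum_apply, Matrix.smul_apply, smul_eq_mul, htr]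
  calc ∑ p : Fin n → ZMod q × ZMod q, (∑ t, ∑ s, (starRingEnd ℂ) (EV q p s t) * M s t) * EV q p v w
      = ∑ p : Fin n → ZMod q × ZMod q, ∑ t, ∑ s,
          M s t * ((starRingEnd ℂ) (EV q p s t) * EV q p v w) := by
        refine Finset.sum_congr rfl fun p _ => ?_
        rw [Finset.sum_mul]
        refine Finset.sum_congr rfl fun t _ => ?_
        rw [Finset.sum_mul]
        exact Finset.sum_congr rfl fun s _ => by ring
    _ = ∑ t, ∑ s, M s t *
          ∑ p : Fin n → ZMod q × ZMod q, (starRingEnd ℂ) (EV q p s t) * EV q p v w := by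
        rw [Finset.sum_comm]
        refine Finset.sum_congr rfl fun t _ => ?_
        rw [Finset.sum_comm]
        refine Finset.sum_congr rfl fun s _ => ?_
        rw [Finset.mul_sum]
    _ = ∑ t, ∑ s, M s t * ((q:ℂ)^n * if s = v ∧ t = w then 1 else 0) := by
        simp only [EV_orth]
    _ = (q:ℂ)^n * M v w := by
        rw [Finset.sum_eq_single w]
        · rw [Finset.sum_eq_single v]
          · simp [mul_comm]
          · intro s _ hs; simp [hs]
          · intro h; exact absurd (Finset.mem_univ v) h
        · intro t _ ht
          apply Finset.sum_eq_zero; intro s _; simp [ht]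
        · intro h; exact absurd (Finset.mem_univ w) h

lemma expand2 {n : ℕ} (M : Matrix (Fin n → Fin q) (Fin n → Fin q) ℂ) :
    ∑ p : Fin n → ZMod q × ZMod q, (EV q p * M).trace • (EV q p)ᴴ = ((q:ℂ)^n) • M := by
  have htr : ∀ p : Fin n → ZMod q × ZMod q,
      (EV q p * M).trace = ∑ s, ∑ t, EV q p s t * M t s := by
    intro p
    simp [Matrix.trace, Matrix.diag, Matrix.mul_apply]
  ext v w
  simp only [Matrix.sum_apply, Matrix.smul_apply, smul_eq_mul, htr, Matrix.conjTranspose_apply]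
  calc ∑ p : Fin n → ZMod q × ZMod q, (∑ s, ∑ t, EV q p s t * M t s) * (starRingEnd ℂ) (EV q p w v)
      = ∑ p : Fin n → ZMod q × ZMod q, ∑ s, ∑ t,
          M t s * ((starRingEnd ℂ) (EV q p w v) * EV q p s t) := by
        refine Finset.sum_congr rfl fun p _ => ?_
        rw [Finset.sum_mul]
        refine Finset.sum_congr rfl fun s _ => ?_
        rw [Finset.sum_mul]
        exact Finset.sum_congr rfl fun t _ => by ring
    _ = ∑ s, ∑ t, M t s *
          ∑ p : Fin n → ZMod q × ZMod q, (starRingEnd ℂ) (EV q p w v) * EV q p s t := by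
        rw [Finset.sum_comm]
        refine Finset.sum_congr rfl fun s _ => ?_
        rw [Finset.sum_comm]
        refine Finset.sum_congr rfl fun t _ => ?_
        rw [Finset.mul_sum]
    _ = ∑ s, ∑ t, M t s * ((q:ℂ)^n * if w = s ∧ v = t then 1 else 0) := by
        simp only [EV_orth]
    _ = (q:ℂ)^n * M v w := by
        rw [Finset.sum_eq_single w]
        · rw [Finset.sum_eq_single v]
          · simp [mul_comm]
          · intro t _ ht; simp [Ne.symm ht]
          · intro h; exact absurd (Finset.mem_univ v) h
        · intro s _ hs
          apply Finset.sum_eq_zero; intro t _; simp [Ne.symm hs]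
        · intro h; exact absurd (Finset.mem_univ w) h

end MacAux3

namespace MacAux4
open MacAux MacAux2 MacAux3

variable (q : ℕ) [NeZero q]

lemma lin {m : Type} [Fintype m] [DecidableEq m] {α β : Type} [Fintype α] [Fintype β]
    (E E' : Matrix m m ℂ) (a : α → ℂ) (b : β → ℂ)
    (A : α → Matrix m m ℂ) (B : β → Matrix m m ℂ) :
    (E * (∑ i, a i • A i) * E' * (∑ j, b j • B j)).trace
      = ∑ i, ∑ j, a i * b j * (E * A i * E' * B j).trace := by
  simp only [Matrix.mul_sum, Matrix.sum_mul, Matrix.mul_smul, Matrix.smul_mul,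
    Matrix.trace_sum, Matrix.trace_smul, smul_smul, smul_eq_mul, Finset.mul_sum]
  rw [Finset.sum_comm]
  exact Finset.sum_congr rfl fun i _ => Finset.sum_congr rfl fun j _ => by ring

lemma trace_quad {n : ℕ} (e p e' p' : Fin n → ZMod q × ZMod q) :
    ((EV q e)ᴴ * EV q p * EV q e' * (EV q p')ᴴ).trace
      = ∏ j, ((Epauli q (e j))ᴴ * Epauli q (p j) * Epauli q (e' j) * (Epauli q (p' j))ᴴ).trace := by
  rw [EV_eq_tens, EV_eq_tens, EV_eq_tens, EV_eq_tens, tens_conjT, tens_conjT,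
    tens_mul, tens_mul, tens_mul, trace_tens]

lemma middle {n : ℕ} (M₁ M₂ : Matrix (Fin n → Fin q) (Fin n → Fin q) ℂ)
    (e e' : Fin n → ZMod q × ZMod q) :
    ∑ p : Fin n → ZMod q × ZMod q, ∑ p' : Fin n → ZMod q × ZMod q,
        ((EV q p)ᴴ * M₁).trace * (EV q p' * M₂).trace *
          ((EV q e)ᴴ * EV q p * EV q e' * (EV q p')ᴴ).trace
      = ((q:ℂ)^n * (q:ℂ)^n) * ((EV q e)ᴴ * M₁ * EV q e' * M₂).trace := by
  have h := lin (EV q e)ᴴ (EV q e')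
      (fun p => ((EV q p)ᴴ * M₁).trace) (fun p' => (EV q p' * M₂).trace)
      (fun p => EV q p) (fun p' => (EV q p')ᴴ)
  rw [expand1, expand2] at h
  rw [← h]
  simp only [Matrix.mul_smul, Matrix.smul_mul, Matrix.trace_smul, smul_eq_mul]
  ring

end MacAux4

/-- General quantum MacWilliams theorem for an arbitrary family of weight functions. -/
theorem stmt7 (q n k : ℕ) [NeZero q] (hq : 2 ≤ q) (hn : 1 ≤ n) (hk : 1 ≤ k)
    (M₁ M₂ : Matrix ((Fin n) → Fin q) ((Fin n) → Fin q) ℂ)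
    (hM₁ : M₁.IsHermitian) (hM₂ : M₂.IsHermitian)
    (wtf : Fin n → (ZMod q × ZMod q) → (ZMod q × ZMod q) → Option (Fin k → ℕ))
    (Φ : (Fin k → ℂ) → (Fin k → ℂ))
    (hΦ : ∀ (j : Fin n) (d d' : ZMod q × ZMod q) (u : Fin k → ℂ),
      mono (Φ u) (wtf j d d') =
        ((q : ℂ) ^ 2)⁻¹ * ∑ e : ZMod q × ZMod q, ∑ e' : ZMod q × ZMod q,
          Matrix.trace ((Epauli q e)ᴴ * Epauli q d * Epauli q e' * (Epauli q d')ᴴ) *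
            mono u (wtf j e e')) (u : Fin k → ℂ) :
    (∑ p : Fin n → ZMod q × ZMod q, ∑ p' : Fin n → ZMod q × ZMod q,
        Matrix.trace ((EV q p)ᴴ * M₁ * EV q p' * M₂) *
          ∏ j, mono u (wtf j (p j) (p' j))) =
      ∑ p : Fin n → ZMod q × ZMod q, ∑ p' : Fin n → ZMod q × ZMod q,
        Matrix.trace ((EV q p)ᴴ * M₁) * Matrix.trace (EV q p' * M₂) *
          ∏ j, mono (Φ u) (wtf j (p j) (p' j)) := by
  classical
  have hq0 : (q:ℂ) ≠ 0 := Nat.cast_ne_zero.mpr (NeZero.ne q)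
  set c : ℂ := ((q:ℂ)^2)⁻¹ with hc
  -- single-site summand
  set F : Fin n → (ZMod q × ZMod q) → (ZMod q × ZMod q) →
      ((ZMod q × ZMod q) × (ZMod q × ZMod q)) → ℂ :=
    fun j d d' g =>
      Matrix.trace ((Epauli q g.1)ᴴ * Epauli q d * Epauli q g.2 * (Epauli q d')ᴴ) *
        mono u (wtf j g.1 g.2) with hF
  have hA : ∀ p p' : Fin n → ZMod q × ZMod q,
      ∏ j, mono (Φ u) (wtf j (p j) (p' j))
        = ∑ g : Fin n → (ZMod q × ZMod q) × (ZMod q × ZMod q),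
            c ^ n * ((((EV q (fun j => (g j).1))ᴴ * EV q p * EV q (fun j => (g j).2)
                * (EV q p')ᴴ).trace) * ∏ j, mono u (wtf j (g j).1 (g j).2)) := by
    intro p p'
    calc ∏ j, mono (Φ u) (wtf j (p j) (p' j))
        = ∏ j, (c * ∑ g : (ZMod q × ZMod q) × (ZMod q × ZMod q), F j (p j) (p' j) g) := by
          refine Finset.prod_congr rfl fun j _ => ?_
          rw [hΦ j (p j) (p' j) u]
          congr 1
          exact (Fintype.sum_prod_type
            (f := fun g : (ZMod q × ZMod q) × (ZMod q × ZMod q) => F j (p j) (p' j) g)).symm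
      _ = c ^ n * ∏ j, ∑ g : (ZMod q × ZMod q) × (ZMod q × ZMod q), F j (p j) (p' j) g := by
          rw [Finset.prod_mul_distrib, Finset.prod_const, Finset.card_univ, Fintype.card_fin]
      _ = c ^ n * ∑ g : Fin n → (ZMod q × ZMod q) × (ZMod q × ZMod q),
            ∏ j, F j (p j) (p' j) (g j) := by
          rw [Fintype.prod_sum (fun j g => F j (p j) (p' j) g)]
      _ = _ := by
          rw [Finset.mul_sum]
          refine Finset.sum_congr rfl fun g _ => ?_
          rw [hF]
          simp only
          rw [Finset.prod_mul_distrib, MacAux4.trace_quad]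
    -- done hA
  symm
  calc ∑ p : Fin n → ZMod q × ZMod q, ∑ p' : Fin n → ZMod q × ZMod q,
        Matrix.trace ((EV q p)ᴴ * M₁) * Matrix.trace (EV q p' * M₂) *
          ∏ j, mono (Φ u) (wtf j (p j) (p' j))
      = ∑ p : Fin n → ZMod q × ZMod q, ∑ p' : Fin n → ZMod q × ZMod q,
          ∑ g : Fin n → (ZMod q × ZMod q) × (ZMod q × ZMod q),
            c ^ n * (Matrix.trace ((EV q p)ᴴ * M₁) * Matrix.trace (EV q p' * M₂) *
              (((EV q (fun j => (g j).1))ᴴ * EV q p * EV q (fun j => (g j).2)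
                * (EV q p')ᴴ).trace) * ∏ j, mono u (wtf j (g j).1 (g j).2)) := by
        refine Finset.sum_congr rfl fun p _ => Finset.sum_congr rfl fun p' _ => ?_
        rw [hA p p', Finset.mul_sum]
        exact Finset.sum_congr rfl fun g _ => by ring
    _ = ∑ g : Fin n → (ZMod q × ZMod q) × (ZMod q × ZMod q),
          ∑ p : Fin n → ZMod q × ZMod q, ∑ p' : Fin n → ZMod q × ZMod q,
            c ^ n * (Matrix.trace ((EV q p)ᴴ * M₁) * Matrix.trace (EV q p' * M₂) *
              (((EV q (fun j => (g j).1))ᴴ * EV q p * EV q (fun j => (g j).2)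
                * (EV q p')ᴴ).trace) * ∏ j, mono u (wtf j (g j).1 (g j).2)) := by
        calc ∑ p : Fin n → ZMod q × ZMod q, ∑ p' : Fin n → ZMod q × ZMod q,
              ∑ g : Fin n → (ZMod q × ZMod q) × (ZMod q × ZMod q),
                c ^ n * (Matrix.trace ((EV q p)ᴴ * M₁) * Matrix.trace (EV q p' * M₂) *
                  (((EV q (fun j => (g j).1))ᴴ * EV q p * EV q (fun j => (g j).2)
                    * (EV q p')ᴴ).trace) * ∏ j, mono u (wtf j (g j).1 (g j).2))
            = ∑ p : Fin n → ZMod q × ZMod q,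
                ∑ g : Fin n → (ZMod q × ZMod q) × (ZMod q × ZMod q),
                  ∑ p' : Fin n → ZMod q × ZMod q,
                    c ^ n * (Matrix.trace ((EV q p)ᴴ * M₁) * Matrix.trace (EV q p' * M₂) *
                      (((EV q (fun j => (g j).1))ᴴ * EV q p * EV q (fun j => (g j).2)
                        * (EV q p')ᴴ).trace) * ∏ j, mono u (wtf j (g j).1 (g j).2)) :=
              Finset.sum_congr rfl fun p _ => Finset.sum_comm
          _ = _ := Finset.sum_comm
    _ = ∑ g : Fin n → (ZMod q × ZMod q) × (ZMod q × ZMod q),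
          Matrix.trace ((EV q (fun j => (g j).1))ᴴ * M₁ * EV q (fun j => (g j).2) * M₂) *
            ∏ j, mono u (wtf j (g j).1 (g j).2) := by
        refine Finset.sum_congr rfl fun g _ => ?_
        have hmid := MacAux4.middle q M₁ M₂ (fun j => (g j).1) (fun j => (g j).2)
        calc ∑ p : Fin n → ZMod q × ZMod q, ∑ p' : Fin n → ZMod q × ZMod q,
              c ^ n * (Matrix.trace ((EV q p)ᴴ * M₁) * Matrix.trace (EV q p' * M₂) *
                (((EV q (fun j => (g j).1))ᴴ * EV q p * EV q (fun j => (g j).2)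
                  * (EV q p')ᴴ).trace) * ∏ j, mono u (wtf j (g j).1 (g j).2))
            = c ^ n * (∏ j, mono u (wtf j (g j).1 (g j).2)) *
                ∑ p : Fin n → ZMod q × ZMod q, ∑ p' : Fin n → ZMod q × ZMod q,
                  Matrix.trace ((EV q p)ᴴ * M₁) * Matrix.trace (EV q p' * M₂) *
                    (((EV q (fun j => (g j).1))ᴴ * EV q p * EV q (fun j => (g j).2)
                      * (EV q p')ᴴ).trace) := by
              rw [Finset.mul_sum]
              refine Finset.sum_congr rfl fun p _ => ?_
              rw [Finset.mul_sum]
              exact Finset.sum_congr rfl fun p' _ => by ring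
          _ = c ^ n * (∏ j, mono u (wtf j (g j).1 (g j).2)) *
                (((q:ℂ)^n * (q:ℂ)^n) *
                  Matrix.trace ((EV q (fun j => (g j).1))ᴴ * M₁ * EV q (fun j => (g j).2) * M₂)) := by
              rw [hmid]
          _ = _ := by
              have : c ^ n * ((q:ℂ)^n * (q:ℂ)^n) = 1 := by
                rw [hc, ← mul_pow, ← mul_pow, ← mul_assoc]
                rw [show ((q:ℂ)^2)⁻¹ * (q:ℂ) * (q:ℂ) = 1 from by
                  rw [mul_assoc, ← sq]
                  exact inv_mul_cancel₀ (pow_ne_zero 2 hq0)]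
                exact one_pow n
              calc c ^ n * (∏ j, mono u (wtf j (g j).1 (g j).2)) *
                    (((q:ℂ)^n * (q:ℂ)^n) * Matrix.trace _)
                  = (c ^ n * ((q:ℂ)^n * (q:ℂ)^n)) *
                      ((∏ j, mono u (wtf j (g j).1 (g j).2)) * Matrix.trace _) := by ring
                _ = _ := by rw [this, one_mul, mul_comm]
    _ = ∑ x : (Fin n → ZMod q × ZMod q) × (Fin n → ZMod q × ZMod q),
          Matrix.trace ((EV q x.1)ᴴ * M₁ * EV q x.2 * M₂) *
            ∏ j, mono u (wtf j (x.1 j) (x.2 j)) := by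
        exact Fintype.sum_equiv
          (Equiv.arrowProdEquivProdArrow (Fin n) (fun _ => ZMod q × ZMod q) (fun _ => ZMod q × ZMod q))
          _ _ (fun g => rfl)
    _ = ∑ p : Fin n → ZMod q × ZMod q, ∑ p' : Fin n → ZMod q × ZMod q,
          Matrix.trace ((EV q p)ᴴ * M₁ * EV q p' * M₂) *
            ∏ j, mono u (wtf j (p j) (p' j)) :=
        Fintype.sum_prod_type
          (f := fun x : (Fin n → ZMod q × ZMod q) × (Fin n → ZMod q × ZMod q) =>
            Matrix.trace ((EV q x.1)ᴴ * M₁ * EV q x.2 * M₂) *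
              ∏ j, mono u (wtf j (x.1 j) (x.2 j)))
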